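/- Let k be a field and X a type; let F := FreeLieAlgebra k (X ⊕ X), let j : FreeLieAlgebra k X → F be the Lie algebra homomorphism induced by x ↦ ι(Sum.inl x), and let V be the Lie ideal of F generated by the dotted generators {ι(Sum.inr x) : x ∈ X}. Then the range of j and the underlying submodule of V are complementary submodules of F: their intersection is trivial and their sum is all of F. -/
import Mathlib

/-- In `F = FreeLieAlgebra k (X ⊕ X)`, the range of the canonical embedding
`j : FreeLieAlgebra k X → F` (induced by the plain generators) and the Lie ideal `V` generated by
the dotted generators are complementary submodules: trivial intersection and full sum. -/
theorem plain_range_compl_dotted_ideal (k : Type*) [Field k] (X : Type*)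
    (j : FreeLieAlgebra k X →ₗ⁅k⁆ FreeLieAlgebra k (X ⊕ X))
    (hj : j = FreeLieAlgebra.lift k fun x : X => FreeLieAlgebra.of k (Sum.inl x))
    (V : LieIdeal k (FreeLieAlgebra k (X ⊕ X)))
    (hV : V = LieSubmodule.lieSpan k (FreeLieAlgebra k (X ⊕ X))
        (Set.range fun x : X => FreeLieAlgebra.of k (Sum.inr x))) :
    LinearMap.range j.toLinearMap ⊓ LieSubmodule.toSubmodule V = ⊥ ∧
    LinearMap.range j.toLinearMap ⊔ LieSubmodule.toSubmodule V = ⊤ := by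
  -- the retraction π : F → FreeLieAlgebra k X, killing dotted generators
  set π : FreeLieAlgebra k (X ⊕ X) →ₗ⁅k⁆ FreeLieAlgebra k X :=
    FreeLieAlgebra.lift k (Sum.elim (FreeLieAlgebra.of k) fun _ => 0) with hπ
  have hπj : ∀ b, π (j b) = b := by
    intro b
    have : π.comp j = LieHom.id := by
      apply FreeLieAlgebra.hom_ext
      intro x
      simp [hπ, hj, FreeLieAlgebra.lift_of_apply]
    calc π (j b) = (π.comp j) b := rfl
      _ = b := by rw [this]; rfl
  have hVker : V ≤ π.ker := by
    rw [hV]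
    apply LieSubmodule.lieSpan_le.mpr
    rintro _ ⟨x, rfl⟩
    simp [LieHom.mem_ker, hπ, FreeLieAlgebra.lift_of_apply]
  constructor
  · rw [eq_bot_iff]
    rintro a ⟨⟨b, rfl⟩, haV⟩
    have h1 : π (j b) = 0 := LieHom.mem_ker.mp (hVker haV)
    rw [hπj] at h1
    simp [h1]
  · -- the sup is a Lie subalgebra containing all generators
    set S : Submodule k (FreeLieAlgebra k (X ⊕ X)) :=
      LinearMap.range j.toLinearMap ⊔ LieSubmodule.toSubmodule V with hS
    have hbr : ∀ {x y : FreeLieAlgebra k (X ⊕ X)}, x ∈ S → y ∈ S → ⁅x, y⁆ ∈ S := by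
      intro x y hx hy
      rw [hS] at hx hy
      obtain ⟨a, ⟨u, rfl⟩, v, hv, rfl⟩ := Submodule.mem_sup.mp hx
      obtain ⟨b, ⟨w, rfl⟩, z, hz, rfl⟩ := Submodule.mem_sup.mp hy
      have key : ⁅(j u : FreeLieAlgebra k (X ⊕ X)) + v, j w + z⁆
          = j ⁅u, w⁆ + (⁅j u, z⁆ + ⁅v, j w⁆ + ⁅v, z⁆) := by
        simp [lie_add, add_lie]
        abel
      simp only [LieHom.coe_toLinearMap]
      rw [key]
      refine Submodule.add_mem_sup ⟨⁅u, w⁆, rfl⟩ ?_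
      refine add_mem (add_mem ?_ ?_) ?_
      · exact V.lie_mem hz
      · rw [← lie_skew]; exact neg_mem (V.lie_mem hv)
      · exact V.lie_mem hz
    set L : LieSubalgebra k (FreeLieAlgebra k (X ⊕ X)) := { S with lie_mem' := hbr } with hL
    have hmem : ∀ p : X ⊕ X, FreeLieAlgebra.of k p ∈ L := by
      rintro (x | x)
      · apply Submodule.mem_sup_left
        exact ⟨FreeLieAlgebra.of k x, by simp [hj, FreeLieAlgebra.lift_of_apply]⟩
      · apply Submodule.mem_sup_right
        rw [hV]
        exact LieSubmodule.subset_lieSpan ⟨x, rfl⟩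
    have hLtop : L = ⊤ := by
      set g : FreeLieAlgebra k (X ⊕ X) →ₗ⁅k⁆ L :=
        FreeLieAlgebra.lift k fun p => (⟨FreeLieAlgebra.of k p, hmem p⟩ : L) with hg
      have hcomp : L.incl.comp g = LieHom.id := by
        apply FreeLieAlgebra.hom_ext
        intro p
        simp [hg, FreeLieAlgebra.lift_of_apply]
      rw [eq_top_iff]
      intro a _
      have : L.incl (g a) = a := by
        calc L.incl (g a) = (L.incl.comp g) a := rfl
          _ = a := by rw [hcomp]; rfl
      rw [← this]
      exact (g a).2
    have : (L : Submodule k (FreeLieAlgebra k (X ⊕ X))) = ⊤ := by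
      rw [hLtop]; rfl
    exact this
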